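/- For any integers q ≥ 3, even d ≥ 2, and real c > 1, the infinite q-regular tree contains q·(q-1)^{⌊cd/2⌋ - ⌊d/2⌋} vertices that are pairwise at distance at least d and at most cd; hence χ(T_q, [d, cd]) ≥ q(q-1)^{⌊cd/2⌋ - ⌊d/2⌋}. -/

import Mathlib

open SimpleGraph

namespace TreeCliqueAux

variable {V : Type*} {G : SimpleGraph V}

lemma exists_geodesic (hc : G.Connected) (u v : V) :
    ∃ p : G.Walk u v, p.IsPath ∧ p.length = G.dist u v := by
  classical
  obtain ⟨p, hp⟩ := hc.exists_walk_length_eq_dist u v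
  exact ⟨p.bypass, p.bypass_isPath,
    le_antisymm (hp ▸ p.length_bypass_le) (SimpleGraph.dist_le _)⟩

lemma dist_split (hc : G.Connected) {u v w : V} (p : G.Walk u v)
    (hl : p.length = G.dist u v) (hw : w ∈ p.support) :
    G.dist u w + G.dist w v = G.dist u v := by
  classical
  have h1 : G.dist u w ≤ (p.takeUntil w hw).length := SimpleGraph.dist_le _
  have h2 : G.dist w v ≤ (p.dropUntil w hw).length := SimpleGraph.dist_le _
  have h3 : (p.takeUntil w hw).length + (p.dropUntil w hw).length = p.length := by
    have h := congrArg SimpleGraph.Walk.length (p.take_spec hw)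
    rwa [SimpleGraph.Walk.length_append] at h
  have h4 := hc.dist_triangle (u := u) (v := w) (w := v)
  omega

lemma concat_isPath {u v w : V} {p : G.Walk u v} (hp : p.IsPath) (h : G.Adj v w)
    (hw : w ∉ p.support) : (p.concat h).IsPath := by
  rw [SimpleGraph.Walk.isPath_def] at hp ⊢
  rw [SimpleGraph.Walk.support_concat]
  simpa [List.concat_eq_append, List.nodup_append] using ⟨hp, fun a ha e => hw (e ▸ ha)⟩


lemma not_mem_geodesic_of_depth_lt (hc : G.Connected) {r u w : V}
    (p : G.Walk r u) (hl : p.length = G.dist r u) (hw : G.dist r u < G.dist r w) :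
    w ∉ p.support := by
  intro hmem
  have h := dist_split hc p hl hmem
  have h2 : G.dist r w ≤ G.dist r u := by omega
  omega

/-- Adjacent vertices have depths differing by exactly one. -/
lemma adj_depth (ht : G.IsTree) (r : V) {u v : V} (h : G.Adj u v) :
    G.dist r u + 1 = G.dist r v ∨ G.dist r v + 1 = G.dist r u := by
  have hc := ht.isConnected
  have hd1 : G.dist u v = 1 := SimpleGraph.dist_eq_one_iff_adj.mpr h
  have hle1 : G.dist r v ≤ G.dist r u + 1 := by
    have := hc.dist_triangle (u := r) (v := u) (w := v); omega
  have hle2 : G.dist r u ≤ G.dist r v + 1 := by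
    have := hc.dist_triangle (u := r) (v := v) (w := u)
    have : G.dist v u = 1 := SimpleGraph.dist_eq_one_iff_adj.mpr h.symm
    omega
  rcases Nat.lt_trichotomy (G.dist r u) (G.dist r v) with hlt | heq | hlt
  · left; omega
  · -- impossible: build two distinct paths from r to v
    exfalso
    obtain ⟨p, hp, hpl⟩ := exists_geodesic hc r v
    obtain ⟨p2, hp2, hp2l⟩ := exists_geodesic hc r u
    have hvp2 : v ∉ p2.support := by
      intro hmem
      have := dist_split hc p2 hp2l hmem
      have hne : u ≠ v := h.ne
      have : G.dist v u ≠ 0 := by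
        exact fun e => hne (hc.dist_eq_zero_iff.mp e).symm
      omega
    have hq : (p2.concat h).IsPath := concat_isPath hp2 h hvp2
    obtain ⟨P, _, hP⟩ := ht.existsUnique_path r v
    have e1 := hP p hp
    have e2 := hP (p2.concat h) hq
    have e3 : p = p2.concat h := e1.trans e2.symm
    have e4 := congrArg SimpleGraph.Walk.length e3
    rw [SimpleGraph.Walk.length_concat] at e4
    omega
  · right; omega


/-- Uniqueness of parents in a tree. -/
lemma parent_unique (ht : G.IsTree) (r : V) {u v w : V}
    (hu : G.Adj w u) (hv : G.Adj w v)
    (hdu : G.dist r u + 1 = G.dist r w) (hdv : G.dist r v + 1 = G.dist r w) :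
    u = v := by
  have hc := ht.isConnected
  -- build paths from w to r through u and through v
  obtain ⟨pu, hpu, hpul⟩ := exists_geodesic hc u r
  obtain ⟨pv, hpv, hpvl⟩ := exists_geodesic hc v r
  have hwu : w ∉ pu.support := by
    intro hmem
    have h1 := dist_split hc pu hpul hmem
    have h2 : G.dist r u = G.dist u r := SimpleGraph.dist_comm ..
    have h3 : G.dist r w = G.dist w r := SimpleGraph.dist_comm ..
    omega
  have hwv : w ∉ pv.support := by
    intro hmem
    have h1 := dist_split hc pv hpvl hmem
    have h2 : G.dist r v = G.dist v r := SimpleGraph.dist_comm ..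
    have h3 : G.dist r w = G.dist w r := SimpleGraph.dist_comm ..
    omega
  have hP1 : (SimpleGraph.Walk.cons hu pu).IsPath := hpu.cons hwu
  have hP2 : (SimpleGraph.Walk.cons hv pv).IsPath := hpv.cons hwv
  obtain ⟨P, _, hP⟩ := ht.existsUnique_path w r
  have e : SimpleGraph.Walk.cons hu pu = SimpleGraph.Walk.cons hv pv :=
    (hP _ hP1).trans (hP _ hP2).symm
  have es := congrArg SimpleGraph.Walk.support e
  rw [SimpleGraph.Walk.support_cons, SimpleGraph.Walk.support_cons,
    pu.support_eq_cons, pv.support_eq_cons] at es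
  exact (List.cons.injEq ..).mp ((List.cons.injEq ..).mp es).2 |>.1

/-- A path leaving a vertex away from its parent keeps ascending. -/
lemma ascend (ht : G.IsTree) (r : V) :
    ∀ {a b : V} (p : G.Walk a b), p.IsPath →
      ∀ u, G.Adj a u → G.dist r a = G.dist r u + 1 → u ∉ p.support →
      G.dist r b = G.dist r a + p.length := by
  intro a b p
  induction p with
  | nil => intro _ _ _ _ _; simp
  | cons h q ih =>
    rename_i x y z
    intro hp u hadj hdep hu
    have hyq : y ∈ (SimpleGraph.Walk.cons h q).support := by
      rw [SimpleGraph.Walk.support_cons]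
      exact List.mem_cons_of_mem _ q.start_mem_support
    rcases adj_depth ht r h with hup | hdown
    · -- ascending step
      have hx : x ∉ q.support := by
        have := hp.support_nodup
        rw [SimpleGraph.Walk.support_cons] at this
        exact (List.nodup_cons.mp this).1
      have := ih hp.of_cons x h.symm (by omega) hx
      rw [SimpleGraph.Walk.length_cons]
      omega
    · -- descending step: y is a parent of x, as is u; contradiction
      exfalso
      have : u = y := parent_unique ht r hadj h (by omega) (by omega)
      exact hu (this ▸ hyq)

/-- Valley property: on a path, depth is at most the max of the endpoint depths. -/
lemma valley (ht : G.IsTree) (r : V) :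
    ∀ {a b : V} (p : G.Walk a b), p.IsPath →
      ∀ w ∈ p.support, G.dist r w ≤ max (G.dist r a) (G.dist r b) := by
  intro a b p
  induction p with
  | nil =>
    intro _ w hw
    rw [SimpleGraph.Walk.support_nil] at hw
    simp_all
  | cons h q ih =>
    rename_i x y z
    intro hp w hw
    have hc := ht.isConnected
    rcases adj_depth ht r h with hup | hdown
    · -- ascending first step: whole path ascends
      have hx : x ∉ q.support := by
        have := hp.support_nodup
        rw [SimpleGraph.Walk.support_cons] at this
        exact (List.nodup_cons.mp this).1
      have hend := ascend ht r q hp.of_cons x h.symm (by omega) hx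
      have h1 : G.dist r w ≤ G.dist r x + G.dist x w := hc.dist_triangle
      classical
      have h2 : G.dist x w ≤ ((SimpleGraph.Walk.cons h q).takeUntil w hw).length :=
        SimpleGraph.dist_le _
      have h3 := (SimpleGraph.Walk.cons h q).length_takeUntil_le hw
      rw [SimpleGraph.Walk.length_cons] at h3
      have : G.dist r w ≤ G.dist r z := by omega
      omega
    · rw [SimpleGraph.Walk.support_cons] at hw
      rcases List.mem_cons.mp hw with rfl | hw'
      · omega
      · have := ih hp.of_cons w hw'
        omega

/-- Children of distinct equal-depth vertices are at distance exactly 2 more. -/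
lemma growth (ht : G.IsTree) (r : V) {u v u' v' : V} (huv : u ≠ v)
    (hdep : G.dist r u = G.dist r v)
    (hu : G.Adj u u') (hu2 : G.dist r u' = G.dist r u + 1)
    (hv : G.Adj v v') (hv2 : G.dist r v' = G.dist r v + 1) :
    G.dist u' v' = G.dist u v + 2 := by
  have hc := ht.isConnected
  obtain ⟨p, hp, hpl⟩ := exists_geodesic hc u v
  have hu'p : u' ∉ p.support := by
    intro hmem
    have := valley ht r p hp u' hmem
    omega
  have hv'p : v' ∉ p.support := by
    intro hmem
    have := valley ht r p hp v' hmem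
    omega
  have hne : u' ≠ v' := by
    intro e
    exact huv (parent_unique ht r hu.symm (e ▸ hv.symm) (by omega) (by omega))
  have hQ : (SimpleGraph.Walk.cons hu.symm (p.concat hv)).IsPath := by
    have h1 : (p.concat hv).IsPath := concat_isPath hp hv hv'p
    refine h1.cons ?_
    rw [SimpleGraph.Walk.support_concat]
    intro hmem
    rcases List.mem_append.mp hmem with h | h
    · exact hu'p h
    · exact hne (by simpa using h)
  obtain ⟨p0, hp0, hp0l⟩ := exists_geodesic hc u' v'
  obtain ⟨P, _, hP⟩ := ht.existsUnique_path u' v'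
  have e : p0 = SimpleGraph.Walk.cons hu.symm (p.concat hv) :=
    (hP _ hp0).trans (hP _ hQ).symm
  have el := congrArg SimpleGraph.Walk.length e
  rw [SimpleGraph.Walk.length_cons, SimpleGraph.Walk.length_concat] at el
  omega

/-- Distinct vertices at equal depth are at distance at least 2. -/
lemma dist_two_of_eq_depth (ht : G.IsTree) (r : V) {u v : V} (huv : u ≠ v)
    (hdep : G.dist r u = G.dist r v) : 2 ≤ G.dist u v := by
  have hc := ht.isConnected
  have h0 : G.dist u v ≠ 0 := fun e => huv (hc.dist_eq_zero_iff.mp e)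
  have h1 : G.dist u v ≠ 1 := by
    intro e
    rcases adj_depth ht r (SimpleGraph.dist_eq_one_iff_adj.mp e) with h | h <;> omega
  omega


/-- Every vertex has at least `q - 1` children; pick any `c0 ≤ q - 1` of them. -/
lemma exists_children (ht : G.IsTree) (r : V) {q : ℕ} (hq : 3 ≤ q)
    (hreg : ∀ v : V, (G.neighborSet v).ncard = q) (u : V) (c0 : ℕ) (hc0 : c0 ≤ q - 1) :
    ∃ T : Finset V, T.card = c0 ∧ ∀ w ∈ T, G.Adj u w ∧ G.dist r w = G.dist r u + 1 := by
  classical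
  set CS : Set V := {w | G.Adj u w ∧ G.dist r w = G.dist r u + 1} with hCS
  set PS : Set V := {w | G.Adj u w ∧ G.dist r w + 1 = G.dist r u} with hPS
  have hnb : (G.neighborSet u).Finite :=
    Set.finite_of_ncard_ne_zero (by rw [hreg u]; omega)
  have hCSfin : CS.Finite := hnb.subset (fun w hw => hw.1)
  have hPSsub : PS.Subsingleton := by
    intro w1 h1 w2 h2
    exact parent_unique ht r h1.1 h2.1 h1.2 h2.2
  have hPScard : PS.ncard ≤ 1 := by
    rcases hPSsub.eq_empty_or_singleton with h | ⟨x, h⟩ <;> simp [h]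
  have hsub : G.neighborSet u ⊆ CS ∪ PS := by
    intro w hw
    rcases adj_depth ht r (hw : G.Adj u w) with h | h
    · exact Or.inl ⟨hw, h.symm⟩
    · exact Or.inr ⟨hw, h⟩
  have hle : q ≤ CS.ncard + PS.ncard := by
    have h1 : (G.neighborSet u).ncard ≤ (CS ∪ PS).ncard :=
      Set.ncard_le_ncard hsub (hCSfin.union (hnb.subset (fun w hw => hw.1)))
    have h2 := Set.ncard_union_le CS PS
    rw [hreg u] at h1
    omega
  have hCScard : c0 ≤ hCSfin.toFinset.card := by
    rw [Set.ncard_eq_toFinset_card _ hCSfin] at hle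
    omega
  obtain ⟨T, hTsub, hTcard⟩ := Finset.exists_subset_card_eq hCScard
  refine ⟨T, hTcard, fun w hw => ?_⟩
  have := hTsub hw
  rw [Set.Finite.mem_toFinset] at this
  exact this

/-- The root has `q` children. -/
lemma exists_children_root (ht : G.IsTree) (r : V) {q : ℕ} (hq : 3 ≤ q)
    (hreg : ∀ v : V, (G.neighborSet v).ncard = q) :
    ∃ T : Finset V, T.card = q ∧ ∀ w ∈ T, G.Adj r w ∧ G.dist r w = 1 := by
  classical
  have hnb : (G.neighborSet r).Finite :=
    Set.finite_of_ncard_ne_zero (by rw [hreg r]; omega)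
  refine ⟨hnb.toFinset, (Set.ncard_eq_toFinset_card _ hnb).symm.trans (hreg r),
    fun w hw => ?_⟩
  rw [Set.Finite.mem_toFinset] at hw
  have hadj : G.Adj r w := hw
  rcases adj_depth ht r hadj with h | h
  · have : G.dist r r = 0 := SimpleGraph.dist_self
    constructor
    · exact hadj
    · omega
  · have : G.dist r r = 0 := SimpleGraph.dist_self
    omega

/-- Main induction: spheres with controlled pairwise distances. -/
lemma main_induction (ht : G.IsTree) {q : ℕ} (hq : 3 ≤ q)
    (hreg : ∀ v : V, (G.neighborSet v).ncard = q) (r : V) (k : ℕ) (i : ℕ) :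
    ∃ S : Finset V, S.card = q * (q - 1) ^ (min i k) ∧
      (∀ v ∈ S, G.dist r v = i + 1) ∧
      ∀ u ∈ S, ∀ v ∈ S, u ≠ v → 2 * (i + 1) ≤ G.dist u v + 2 * min i k := by
  classical
  induction i with
  | zero =>
    obtain ⟨T, hTcard, hT⟩ := exists_children_root ht r hq hreg
    refine ⟨T, by simp [hTcard], fun v hv => (hT v hv).2, fun u hu v hv huv => ?_⟩
    have h2 := dist_two_of_eq_depth ht r huv (by rw [(hT u hu).2, (hT v hv).2])
    omega
  | succ i ih =>
    obtain ⟨S, hScard, hSdep, hSdist⟩ := ih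
    set c0 : ℕ := if i < k then q - 1 else 1 with hc0def
    have hc0 : c0 ≤ q - 1 := by rw [hc0def]; split <;> omega
    have hch : ∀ u : V, ∃ T : Finset V, T.card = c0 ∧
        ∀ w ∈ T, G.Adj u w ∧ G.dist r w = G.dist r u + 1 :=
      fun u => exists_children ht r hq hreg u c0 hc0
    choose Cf hCcard hCmem using hch
    have hdisj : ∀ x ∈ S, ∀ y ∈ S, x ≠ y → Disjoint (Cf x) (Cf y) := by
      intro x hx y hy hxy
      rw [Finset.disjoint_left]
      intro w hwx hwy
      obtain ⟨hax, hdx⟩ := hCmem x w hwx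
      obtain ⟨hay, hdy⟩ := hCmem y w hwy
      exact hxy (parent_unique ht r hax.symm hay.symm
        (by rw [hSdep x hx, hSdep y hy] at *; omega)
        (by rw [hSdep x hx, hSdep y hy] at *; omega))
    refine ⟨S.biUnion Cf, ?_, ?_, ?_⟩
    · rw [Finset.card_biUnion hdisj]
      have : ∀ u ∈ S, (Cf u).card = c0 := fun u _ => hCcard u
      rw [Finset.sum_congr rfl this, Finset.sum_const, smul_eq_mul, hScard]
      rcases Nat.lt_or_ge i k with h | h
      · have h1 : min i k = i := by omega
        have h2 : min (i + 1) k = i + 1 := by omega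
        have h3 : c0 = q - 1 := by rw [hc0def, if_pos h]
        rw [h1, h2, h3, pow_succ]; ring
      · have h1 : min i k = k := by omega
        have h2 : min (i + 1) k = k := by omega
        have h3 : c0 = 1 := by rw [hc0def, if_neg (by omega)]
        rw [h1, h2, h3, mul_one]
    · intro v hv
      obtain ⟨u, hu, hvc⟩ := Finset.mem_biUnion.mp hv
      rw [(hCmem u v hvc).2, hSdep u hu]
    · intro u' hu' v' hv' hne
      obtain ⟨x, hx, hu'c⟩ := Finset.mem_biUnion.mp hu'
      obtain ⟨y, hy, hv'c⟩ := Finset.mem_biUnion.mp hv'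
      obtain ⟨hax, hdx⟩ := hCmem x u' hu'c
      obtain ⟨hay, hdy⟩ := hCmem y v' hv'c
      have hdepx := hSdep x hx
      have hdepy := hSdep y hy
      by_cases hxy : x = y
      · subst hxy
        rcases Nat.lt_or_ge i k with h | h
        · have h2 : min (i + 1) k = i + 1 := by omega
          have hdd : G.dist r u' = G.dist r v' := by omega
          have := dist_two_of_eq_depth ht r hne hdd
          omega
        · exfalso
          have h3 : c0 = 1 := by rw [hc0def, if_neg (by omega)]
          have : (Cf x).card ≤ 1 := by rw [hCcard x, h3]
          exact hne (Finset.card_le_one.mp this u' hu'c v' hv'c)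
      · have hg := growth ht r hxy (by omega) hax hdx hay hdy
        have hinv := hSdist x hx y hy hxy
        have hmin : min i k ≤ min (i + 1) k := by omega
        omega

end TreeCliqueAux

/-- For `q ≥ 3`, even `d ≥ 2`, and real `c > 1`, the infinite `q`-regular tree
contains `q(q-1)^(⌊cd/2⌋ - ⌊d/2⌋)` vertices pairwise at distance at least `d`
and at most `cd`; hence any coloring in which such pairs get distinct colors
uses at least `q(q-1)^(⌊cd/2⌋ - ⌊d/2⌋)` colors. -/
theorem regular_tree_interval_clique_and_chromatic_lb {V : Type*}
    (G : SimpleGraph V) (q d : ℕ) (c : ℝ) (hq : 3 ≤ q) (hc : 1 < c)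
    (hd : Even d) (hd2 : 2 ≤ d)
    (htree : G.IsTree) (hreg : ∀ v : V, (G.neighborSet v).ncard = q) :
    (∃ S : Finset V, S.card = q * (q - 1) ^ (⌊c * d / 2⌋₊ - d / 2) ∧
      ∀ u ∈ S, ∀ v ∈ S, u ≠ v →
        (d : ℝ) ≤ G.dist u v ∧ (G.dist u v : ℝ) ≤ c * d) ∧
    ∀ (C : ℕ) (f : V → Fin C),
      (∀ u v : V, u ≠ v → (d : ℝ) ≤ G.dist u v → (G.dist u v : ℝ) ≤ c * d →
        f u ≠ f v) →
      q * (q - 1) ^ (⌊c * d / 2⌋₊ - d / 2) ≤ C := by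
  classical
  have hconn : G.Connected := htree.isConnected
  have hne : Nonempty V := hconn.nonempty
  obtain ⟨r⟩ := hne
  obtain ⟨e0, he0⟩ := hd
  have he01 : 1 ≤ e0 := by omega
  have hd0 : (0 : ℝ) ≤ (d : ℝ) := Nat.cast_nonneg d
  have hc0 : (0 : ℝ) ≤ c := by linarith
  set m : ℕ := ⌊c * d / 2⌋₊ with hm
  have hmd : e0 ≤ m := by
    rw [hm]
    apply Nat.le_floor
    have he : (e0 : ℝ) = (d : ℝ) / 2 := by rw [he0]; push_cast; ring
    rw [he]
    nlinarith
  set k : ℕ := m - e0 with hk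
  have hdiv : d / 2 = e0 := by omega
  obtain ⟨S, hScard, hSdep, hSdist⟩ :=
    TreeCliqueAux.main_induction htree hq hreg r k (k + e0 - 1)
  have hi1 : k + e0 - 1 + 1 = m := by omega
  have hmin : min (k + e0 - 1) k = k := by omega
  have key : ∀ u ∈ S, ∀ v ∈ S, u ≠ v →
      (d : ℝ) ≤ G.dist u v ∧ (G.dist u v : ℝ) ≤ c * d := by
    intro u hu v hv huv
    have hdl := hSdist u hu v hv huv
    rw [hmin] at hdl
    have hdu := hSdep u hu
    have hdv := hSdep v hv
    rw [hi1] at hdu hdv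
    constructor
    · have hnat : d ≤ G.dist u v := by omega
      exact_mod_cast hnat
    · have htri : G.dist u v ≤ G.dist u r + G.dist r v := hconn.dist_triangle
      have hcm : G.dist u r = G.dist r u := SimpleGraph.dist_comm ..
      have h2m : G.dist u v ≤ 2 * m := by omega
      have hfl : (m : ℝ) ≤ c * d / 2 := Nat.floor_le (by nlinarith)
      have hcast : (G.dist u v : ℝ) ≤ 2 * (m : ℝ) := by exact_mod_cast h2m
      linarith
  have hScard' : S.card = q * (q - 1) ^ (m - d / 2) := by
    rw [hScard, hmin]
    congr 2
    omega
  refine ⟨⟨S, hScard', key⟩, ?_⟩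
  intro C f hf
  rw [← hScard']
  have hinj : S.card ≤ (Finset.univ : Finset (Fin C)).card := by
    apply Finset.card_le_card_of_injOn f (fun a _ => Finset.mem_univ _)
    intro a ha b hb hab
    by_contra hab'
    rw [Finset.mem_coe] at ha hb
    obtain ⟨h1, h2⟩ := key a ha b hb hab'
    exact hf a b hab' h1 h2 hab
  simpa using hinj
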